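/- arXiv:2204.05777 — 2 statements merged into one kernel-verified Lean document; each statement's English description precedes it below -/
import Mathlib

section
/- Let Δ be a simplicial complex on [n] and b ⊆ [n]. Then Ñ_b(Δ) = ∅ if and only if for every minimal nonface C of Δ, the set b is either contained in C or disjoint from C. -/
def IsComplex {n : ℕ} (Δ : Set (Finset (Fin n))) : Prop :=
  Δ.Nonempty ∧ ∀ F ∈ Δ, ∀ G ⊆ F, G ∈ Δ

def IsMatroid {n : ℕ} (Δ : Set (Finset (Fin n))) : Prop :=
  IsComplex Δ ∧ ∀ I ∈ Δ, ∀ J ∈ Δ, J.card < I.card → ∃ v ∈ I, v ∉ J ∧ insert v J ∈ Δ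

def MinNonface {n : ℕ} (Δ : Set (Finset (Fin n))) (C : Finset (Fin n)) : Prop :=
  C ∉ Δ ∧ ∀ A ⊂ C, A ∈ Δ

def Ndel {n : ℕ} (Δ : Set (Finset (Fin n))) (b : Finset (Fin n)) : Set (Finset (Fin n)) :=
  {F | F ∈ Δ ∧ F ∩ b = ∅ ∧ F ∪ b ∉ Δ}

def NdelRed {n : ℕ} (Δ : Set (Finset (Fin n))) (b : Finset (Fin n)) : Set (Finset (Fin n)) :=
  {F | F ∈ Ndel Δ b ∧ ∃ b' ⊂ b, F ∪ b' ∉ Δ}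

def Deletion {n : ℕ} (Δ : Set (Finset (Fin n))) (b : Finset (Fin n)) : Set (Finset (Fin n)) :=
  {F | F ∈ Δ ∧ F ∩ b = ∅}

def Link {n : ℕ} (Δ : Set (Finset (Fin n))) (b : Finset (Fin n)) : Set (Finset (Fin n)) :=
  {F | F ∈ Δ ∧ F ∩ b = ∅ ∧ F ∪ b ∈ Δ}

def IsBasisOf {n : ℕ} (Γ : Set (Finset (Fin n))) (B : Finset (Fin n)) : Prop :=
  B ∈ Γ ∧ ∀ F ∈ Γ, B ⊆ F → F = B

def MinimalIn {n : ℕ} (S : Set (Finset (Fin n))) (F : Finset (Fin n)) : Prop :=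
  F ∈ S ∧ ∀ G ∈ S, G ⊆ F → G = F

def MaximalIn {n : ℕ} (S : Set (Finset (Fin n))) (F : Finset (Fin n)) : Prop :=
  F ∈ S ∧ ∀ G ∈ S, F ⊆ G → G = F


lemma exists_minNonface {n : ℕ} (Δ : Set (Finset (Fin n))) :
    ∀ S : Finset (Fin n), S ∉ Δ → ∃ C ⊆ S, MinNonface Δ C := by
  intro S
  induction S using Finset.strongInduction with
  | _ S ih =>
    intro hS
    by_cases h : ∀ A ⊂ S, A ∈ Δ
    · exact ⟨S, subset_rfl, hS, h⟩
    · push_neg at h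
      obtain ⟨A, hA, hAn⟩ := h
      obtain ⟨C, hCA, hC⟩ := ih A hA hAn
      exact ⟨C, hCA.trans hA.subset, hC⟩

theorem stmt2 (n : ℕ) (Δ : Set (Finset (Fin n))) (hΔ : IsComplex Δ)
    (b : Finset (Fin n)) :
    NdelRed Δ b = ∅ ↔ ∀ C, MinNonface Δ C → b ⊆ C ∨ C ∩ b = ∅ := by
  constructor
  · intro h C hC
    by_contra hcon
    push_neg at hcon
    obtain ⟨hbC, hCb⟩ := hcon
    have hss : C \ b ⊂ C := by
      obtain ⟨x, hx⟩ := hCb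
      simp only [Finset.mem_inter] at hx
      exact ⟨Finset.sdiff_subset, fun hsub => by
        have := hsub hx.1
        simp [hx.2] at this⟩
    have hF : C \ b ∈ NdelRed Δ b := by
      refine ⟨⟨hC.2 _ hss, Finset.sdiff_inter_self b C, ?_⟩, C ∩ b, ?_, ?_⟩
      · intro hin
        exact hC.1 (hΔ.2 _ hin C (fun x hx => by
          simp only [Finset.mem_union, Finset.mem_sdiff]; tauto))
      · refine ⟨Finset.inter_subset_right, fun hsub => hbC fun x hx => ?_⟩
        exact (Finset.mem_inter.1 (hsub hx)).1
      · rw [Finset.sdiff_union_inter]; exact hC.1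
    rw [h] at hF
    exact hF
  · intro h
    ext F
    simp only [Set.mem_empty_iff_false, iff_false]
    rintro ⟨⟨hFΔ, hFb, hFub⟩, b', hb', hFb'⟩
    obtain ⟨C, hCsub, hC⟩ := exists_minNonface Δ (F ∪ b') hFb'
    rcases h C hC with hbC | hCb
    · obtain ⟨x, hxb, hxb'⟩ := Finset.exists_of_ssubset hb'
      have hx : x ∈ F ∪ b' := hCsub (hbC hxb)
      rcases Finset.mem_union.1 hx with hxF | hxb''
      · have : x ∈ F ∩ b := Finset.mem_inter.2 ⟨hxF, hxb⟩
        simp [hFb] at this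
      · exact hxb' hxb''
    · have : C ⊆ F := fun x hx => by
        rcases Finset.mem_union.1 (hCsub hx) with h1 | h1
        · exact h1
        · exact absurd (Finset.mem_inter.2 ⟨hx, hb'.subset h1⟩) (by simp [hCb])
      exact hC.1 (hΔ.2 F hFΔ C this)
end

section
/- Let M be a matroid on [n] and b ⊆ [n]. If Ñ_b(M) is nonempty, then the inclusion-maximal elements of N_b(M) coincide with the inclusion-maximal elements of Ñ_b(M). -/
lemma mem_down {n : ℕ} {M : Set (Finset (Fin n))} (hM : IsMatroid M)
    {F G : Finset (Fin n)} (hF : F ∈ M) (h : G ⊆ F) : G ∈ M :=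
  hM.1.2 F hF G h

lemma grow {n : ℕ} {M : Set (Finset (Fin n))} (hM : IsMatroid M) :
    ∀ k (I J : Finset (Fin n)), I ∈ M → J ∈ M → I.card = J.card + k →
      ∃ K ∈ M, J ⊆ K ∧ K ⊆ J ∪ I ∧ K.card = I.card := by
  intro k
  induction k with
  | zero =>
    intro I J hI hJ hc
    exact ⟨J, hJ, subset_rfl, Finset.subset_union_left, by omega⟩
  | succ k ih =>
    intro I J hI hJ hc
    obtain ⟨v, hvI, hvJ, hins⟩ := hM.2 I hI J hJ (by omega)
    obtain ⟨K, hK, h1, h2, h3⟩ := ih I (insert v J) hI hins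
      (by rw [Finset.card_insert_of_notMem hvJ]; omega)
    refine ⟨K, hK, (Finset.subset_insert v J).trans h1, h2.trans ?_, h3⟩
    exact Finset.union_subset
      (Finset.insert_subset (Finset.mem_union_right _ hvI) Finset.subset_union_left)
      Finset.subset_union_right

lemma key {n : ℕ} {M : Set (Finset (Fin n))} (hM : IsMatroid M)
    {b F G : Finset (Fin n)} (hG : G ∈ NdelRed M b) (hF : MaximalIn (Ndel M b) F) :
    F ∈ NdelRed M b := by
  obtain ⟨⟨hGM, hGb, hGub⟩, b'', hb''sub, hb''⟩ := hG
  obtain ⟨⟨hFM, hFb, hFub⟩, hFmax⟩ := hF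
  by_contra hcon
  have hall : ∀ b' ⊂ b, F ∪ b' ∈ M := by
    intro b' hb'
    by_contra hc
    exact hcon ⟨⟨hFM, hFb, hFub⟩, b', hb', hc⟩
  obtain ⟨y, hyb, hyb''⟩ := Finset.exists_of_ssubset hb''sub
  -- maximal-cardinality independent set D in the complement of b containing G
  have hSfin : (({J | J ∈ M ∧ J ∩ b = ∅ ∧ G ⊆ J} : Set (Finset (Fin n)))).Finite :=
    Set.toFinite _
  obtain ⟨D, hDS, hDmax⟩ := Set.Finite.exists_maximalFor Finset.card _ hSfin
    ⟨G, hGM, hGb, subset_rfl⟩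
  obtain ⟨hDM, hDb, hGD⟩ := hDS
  have le_d : ∀ J, J ∈ M → J ∩ b = ∅ → J.card ≤ D.card := by
    intro J hJ hJb
    by_contra hlt
    push_neg at hlt
    obtain ⟨v, hvJ, hvD, hins⟩ := hM.2 J hJ D hDM hlt
    have hvb : v ∉ b := by
      intro hv
      have : v ∈ J ∩ b := Finset.mem_inter.2 ⟨hvJ, hv⟩
      rw [hJb] at this
      exact absurd this (Finset.notMem_empty v)
    have hmem : insert v D ∈ ({J | J ∈ M ∧ J ∩ b = ∅ ∧ G ⊆ J} : Set (Finset (Fin n))) := by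
      refine ⟨hins, ?_, hGD.trans (Finset.subset_insert v D)⟩
      rw [Finset.insert_inter_of_notMem hvb, hDb]
    have := hDmax hmem (by rw [Finset.card_insert_of_notMem hvD]; omega)
    rw [Finset.card_insert_of_notMem hvD] at this
    omega
  have hFd_le : F.card ≤ D.card := le_d F hFM hFb
  have hFd_ge : D.card ≤ F.card := by
    by_contra hlt
    push_neg at hlt
    obtain ⟨v, hvD, hvF, hins⟩ := hM.2 D hDM F hFM hlt
    have hvb : v ∉ b := by
      intro hv
      have : v ∈ D ∩ b := Finset.mem_inter.2 ⟨hvD, hv⟩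
      rw [hDb] at this
      exact absurd this (Finset.notMem_empty v)
    have hN : insert v F ∈ Ndel M b := by
      refine ⟨hins, by rw [Finset.insert_inter_of_notMem hvb, hFb], fun hmem => hFub ?_⟩
      exact mem_down hM hmem (Finset.union_subset_union_left (Finset.subset_insert v F))
    have := hFmax _ hN (Finset.subset_insert v F)
    exact hvF (this ▸ Finset.mem_insert_self v F)
  -- the independent set I = F ∪ (b erase y)
  have herase : b.erase y ⊂ b := Finset.erase_ssubset hyb
  have hI : F ∪ b.erase y ∈ M := hall _ herase
  have hdisj : Disjoint F (b.erase y) := by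
    rw [Finset.disjoint_left]
    intro a haF hae
    have : a ∈ F ∩ b := Finset.mem_inter.2 ⟨haF, Finset.mem_of_mem_erase hae⟩
    rw [hFb] at this
    exact absurd this (Finset.notMem_empty a)
  have hIcard : (F ∪ b.erase y).card = F.card + (b.erase y).card :=
    Finset.card_union_of_disjoint hdisj
  obtain ⟨K, hKM, hDK, hKsub, hKcard⟩ := grow hM (b.erase y).card (F ∪ b.erase y) D hI hDM
    (by omega)
  -- K \ b = D
  have hKbM : K \ b ∈ M := mem_down hM hKM (Finset.sdiff_subset)
  have hKbb : (K \ b) ∩ b = ∅ := by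
    rw [Finset.sdiff_inter_self]
  have hDsub : D ⊆ K \ b := by
    rw [Finset.subset_sdiff]
    refine ⟨hDK, ?_⟩
    rw [Finset.disjoint_iff_inter_eq_empty]
    exact hDb
  have hKb_eq : K \ b = D :=
    (Finset.eq_of_subset_of_card_le hDsub (le_d _ hKbM hKbb)).symm
  -- K ∩ b = b.erase y
  have hKib_sub : K ∩ b ⊆ b.erase y := by
    intro a ha
    obtain ⟨haK, hab⟩ := Finset.mem_inter.1 ha
    have := hKsub haK
    rcases Finset.mem_union.1 this with hD | hFI
    · exfalso
      have : a ∈ D ∩ b := Finset.mem_inter.2 ⟨hD, hab⟩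
      rw [hDb] at this
      exact absurd this (Finset.notMem_empty a)
    · rcases Finset.mem_union.1 hFI with hFa | he
      · exfalso
        have : a ∈ F ∩ b := Finset.mem_inter.2 ⟨hFa, hab⟩
        rw [hFb] at this
        exact absurd this (Finset.notMem_empty a)
      · exact he
  have hsplit : (K ∩ b).card + (K \ b).card = K.card := Finset.card_inter_add_card_sdiff K b
  have hKib_card : (b.erase y).card ≤ (K ∩ b).card := by
    rw [hKb_eq] at hsplit
    omega
  have hKib_eq : K ∩ b = b.erase y :=
    Finset.eq_of_subset_of_card_le hKib_sub hKib_card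
  have hKeq : K = D ∪ b.erase y := by
    rw [← hKib_eq, ← hKb_eq]
    exact (Finset.sdiff_union_inter K b).symm
  have hsubK : G ∪ b'' ⊆ K := by
    rw [hKeq]
    refine Finset.union_subset (hGD.trans Finset.subset_union_left) ?_
    refine (Finset.subset_erase.2 ⟨hb''sub.subset, hyb''⟩).trans Finset.subset_union_right
  exact hb'' (mem_down hM hKM hsubK)

theorem stmt8 (n : ℕ) (M : Set (Finset (Fin n))) (hM : IsMatroid M)
    (b : Finset (Fin n)) (h : (NdelRed M b).Nonempty) :
    ∀ F, MaximalIn (Ndel M b) F ↔ MaximalIn (NdelRed M b) F := by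
  obtain ⟨G, hG⟩ := h
  intro F
  constructor
  · intro hF
    exact ⟨key hM hG hF, fun H hH hFH => hF.2 H hH.1 hFH⟩
  · intro hF
    refine ⟨hF.1.1, ?_⟩
    intro H hH hFH
    obtain ⟨hFN, b', hb', hb'2⟩ := hF.1
    have hHred : H ∈ NdelRed M b :=
      ⟨hH, b', hb', fun hm => hb'2 (mem_down hM hm (Finset.union_subset_union_left hFH))⟩
    exact hF.2 H hHred hFH
end
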